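/- Under Kac's scaling condition (c→∞, λ→∞, c²/λ→ρ² with ρ>0 fixed), for each fixed x∈ℝ and t>0, the absolutely continuous part of the telegraph density (λ e^{-λt}/(2c))[I₀((λ/c)√(c²t²−x²)) + (ct/√(c²t²−x²)) I₁((λ/c)√(c²t²−x²))]·1_{|x|<ct} converges to the Gaussian heat kernel (1/√(2πρ²t)) exp(−x²/(2ρ²t)). -/

import Mathlib

open Real Filter

noncomputable def besselI0 (z : ℝ) : ℝ := ∑' k : ℕ, (z / 2) ^ (2 * k) / ((k.factorial : ℝ)) ^ 2

noncomputable def besselI1 (z : ℝ) : ℝ :=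
  ∑' k : ℕ, (z / 2) ^ (2 * k + 1) / ((k.factorial : ℝ) * ((k + 1).factorial : ℝ))

namespace TelegraphAux

open MeasureTheory intervalIntegral

lemma real_exp_tsum (x : ℝ) : Real.exp x = ∑' n : ℕ, x ^ n / (n.factorial : ℝ) := by
  rw [Real.exp_eq_exp_ℝ, NormedSpace.exp_eq_tsum_div]

lemma cos_pow_int_even (m : ℕ) :
    (∫ θ in (0:ℝ)..π, Real.cos θ ^ (2 * m))
      = π * ∏ i ∈ Finset.range m, (2 * (i:ℝ) + 1) / (2 * (i:ℝ) + 2) := by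
  induction m with
  | zero => simp
  | succ k ih =>
    have h : 2 * (k + 1) = 2 * k + 2 := by ring
    rw [h, integral_cos_pow, Real.sin_pi, Real.sin_zero, ih, Finset.prod_range_succ]
    push_cast
    ring

lemma cos_pow_int_odd (m : ℕ) : (∫ θ in (0:ℝ)..π, Real.cos θ ^ (2 * m + 1)) = 0 := by
  induction m with
  | zero => simpa using (integral_cos (a := 0) (b := π))
  | succ k ih =>
    have h : 2 * (k + 1) + 1 = (2 * k + 1) + 2 := by ring
    rw [h, integral_cos_pow, Real.sin_pi, Real.sin_zero, ih]
    simp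

lemma prod_formula (m : ℕ) :
    ∏ i ∈ Finset.range m, (2 * (i:ℝ) + 1) / (2 * (i:ℝ) + 2)
      = ((2 * m).factorial : ℝ) / (4 ^ m * ((m.factorial : ℝ)) ^ 2) := by
  induction m with
  | zero => simp
  | succ k ih =>
    rw [Finset.prod_range_succ, ih]
    have h2 : 2 * (k + 1) = (2 * k + 1) + 1 := by ring
    rw [h2, Nat.factorial_succ, Nat.factorial_succ, Nat.factorial_succ]
    have hfk : ((k.factorial : ℝ)) ≠ 0 := Nat.cast_ne_zero.2 k.factorial_ne_zero
    have hf2k : (((2 * k).factorial : ℝ)) ≠ 0 := Nat.cast_ne_zero.2 (2 * k).factorial_ne_zero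
    push_cast
    field_simp
    ring

lemma exp_cos_swap (z : ℝ) (p : ℕ) :
    (∫ θ in (0:ℝ)..π, Real.exp (z * Real.cos θ) * Real.cos θ ^ p)
      = ∑' k : ℕ, (z ^ k / (k.factorial : ℝ)) * ∫ θ in (0:ℝ)..π, Real.cos θ ^ (k + p) := by
  have h1 : ∀ θ : ℝ, Real.exp (z * Real.cos θ) * Real.cos θ ^ p
      = ∑' k : ℕ, (z ^ k / (k.factorial : ℝ)) * Real.cos θ ^ (k + p) := by
    intro θ
    rw [real_exp_tsum (z * Real.cos θ), ← tsum_mul_right]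
    congr 1
    funext k
    rw [mul_pow, pow_add]
    ring
  have hIoc : ∀ k : ℕ, (∫ θ in (0:ℝ)..π, Real.cos θ ^ (k + p))
      = ∫ θ in Set.Ioc (0:ℝ) π, Real.cos θ ^ (k + p) := fun k =>
    intervalIntegral.integral_of_le Real.pi_pos.le
  rw [intervalIntegral.integral_of_le Real.pi_pos.le]
  simp only [h1, hIoc]
  rw [← MeasureTheory.integral_tsum_of_summable_integral_norm]
  · refine tsum_congr fun k => ?_
    rw [MeasureTheory.integral_const_mul]
  · intro k
    apply Continuous.integrableOn_Ioc
    fun_prop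
  · apply Summable.of_nonneg_of_le
      (fun k => integral_nonneg fun θ => norm_nonneg _) ?_
      ((Real.summable_pow_div_factorial |z|).mul_right π)
    intro k
    have hbd : ∀ θ : ℝ, ‖(z ^ k / (k.factorial : ℝ)) * Real.cos θ ^ (k + p)‖
        ≤ |z| ^ k / (k.factorial : ℝ) := by
      intro θ
      rw [norm_mul, Real.norm_eq_abs, Real.norm_eq_abs, abs_div, abs_pow, abs_pow,
        Nat.abs_cast]
      have h1 : |Real.cos θ| ^ (k + p) ≤ 1 :=
        pow_le_one₀ (abs_nonneg _) (Real.abs_cos_le_one θ)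
      have h2 : (0:ℝ) ≤ |z| ^ k / (k.factorial : ℝ) := by positivity
      calc |z| ^ k / (k.factorial : ℝ) * |Real.cos θ| ^ (k + p)
          ≤ |z| ^ k / (k.factorial : ℝ) * 1 := by
            apply mul_le_mul_of_nonneg_left h1 h2
        _ = |z| ^ k / (k.factorial : ℝ) := mul_one _
    calc (∫ θ in Set.Ioc (0:ℝ) π, ‖(z ^ k / (k.factorial : ℝ)) * Real.cos θ ^ (k + p)‖)
        ≤ ∫ _θ in Set.Ioc (0:ℝ) π, |z| ^ k / (k.factorial : ℝ) := by
          apply MeasureTheory.integral_mono_of_nonneg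
          · exact Filter.Eventually.of_forall fun θ => norm_nonneg _
          · exact MeasureTheory.integrableOn_const (by simp [Real.volume_Ioc]) (by simp)
          · exact Filter.Eventually.of_forall fun θ => hbd θ
      _ = |z| ^ k / (k.factorial : ℝ) * π := by
          rw [MeasureTheory.setIntegral_const]
          simp [Real.volume_Ioc, Real.pi_pos.le, mul_comm]

lemma term0 (z : ℝ) (m : ℕ) :
    z ^ (2 * m) / (((2 * m).factorial : ℝ))
        * (π * (((2 * m).factorial : ℝ) / (4 ^ m * ((m.factorial : ℝ)) ^ 2)))
      = π * ((z / 2) ^ (2 * m) / ((m.factorial : ℝ)) ^ 2) := by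
  have hfm : ((m.factorial : ℝ)) ≠ 0 := Nat.cast_ne_zero.2 m.factorial_ne_zero
  have hf2m : (((2 * m).factorial : ℝ)) ≠ 0 := Nat.cast_ne_zero.2 (2 * m).factorial_ne_zero
  have h4 : ((2:ℝ)) ^ (2 * m) = 4 ^ m := by
    rw [pow_mul]; norm_num
  rw [div_pow, h4]
  field_simp

lemma term1 (z : ℝ) (m : ℕ) :
    z ^ (2 * m + 1) / (((2 * m + 1).factorial : ℝ))
        * (π * (((2 * (m + 1)).factorial : ℝ) / (4 ^ (m + 1) * (((m + 1).factorial : ℝ)) ^ 2)))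
      = π * ((z / 2) ^ (2 * m + 1) / ((m.factorial : ℝ) * (((m + 1).factorial : ℝ)))) := by
  have e1 : ((2 * (m + 1)).factorial : ℝ) = (2 * (m:ℝ) + 2) * (((2 * m + 1).factorial : ℝ)) := by
    have h : 2 * (m + 1) = (2 * m + 1) + 1 := by ring
    rw [h, Nat.factorial_succ]; push_cast; ring
  have e2 : (((m + 1).factorial : ℝ)) = ((m:ℝ) + 1) * ((m.factorial : ℝ)) := by
    rw [Nat.factorial_succ]; push_cast; ring
  have h4 : ((4:ℝ)) ^ (m + 1) = 2 ^ (2 * m + 1) * 2 := by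
    rw [show ((4:ℝ)) = 2 ^ 2 by norm_num, ← pow_mul, ← pow_succ]
    ring_nf
  have hfm : ((m.factorial : ℝ)) ≠ 0 := Nat.cast_ne_zero.2 m.factorial_ne_zero
  have hf2m1 : (((2 * m + 1).factorial : ℝ)) ≠ 0 :=
    Nat.cast_ne_zero.2 (2 * m + 1).factorial_ne_zero
  have hm1 : ((m:ℝ) + 1) ≠ 0 := by positivity
  rw [e1, e2, h4, div_pow]
  field_simp

lemma besselI0_integral (z : ℝ) :
    π * besselI0 z = ∫ θ in (0:ℝ)..π, Real.exp (z * Real.cos θ) := by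
  have h := exp_cos_swap z 0
  simp only [pow_zero, mul_one, add_zero] at h
  rw [h]
  rw [← Function.Injective.tsum_eq (g := fun m : ℕ => 2 * m)
    (fun a b hab => by dsimp at hab; omega) ?_]
  · rw [besselI0, ← tsum_mul_left]
    refine tsum_congr fun m => ?_
    rw [cos_pow_int_even, prod_formula]
    exact (term0 z m).symm
  · intro k hk
    simp only [Function.mem_support] at hk
    rcases Nat.even_or_odd k with he | ho
    · obtain ⟨r, rfl⟩ := he
      exact ⟨r, by dsimp; omega⟩
    · exfalso
      obtain ⟨r, rfl⟩ := ho
      exact hk (by rw [cos_pow_int_odd, mul_zero])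

lemma besselI1_integral (z : ℝ) :
    π * besselI1 z = ∫ θ in (0:ℝ)..π, Real.exp (z * Real.cos θ) * Real.cos θ := by
  have h := exp_cos_swap z 1
  simp only [pow_one] at h
  rw [h]
  rw [← Function.Injective.tsum_eq (g := fun m : ℕ => 2 * m + 1)
    (fun a b hab => by dsimp at hab; omega) ?_]
  · rw [besselI1, ← tsum_mul_left]
    refine tsum_congr fun m => ?_
    have h1 : 2 * m + 1 + 1 = 2 * (m + 1) := by ring
    rw [h1, cos_pow_int_even, prod_formula]
    exact (term1 z m).symm
  · intro k hk
    simp only [Function.mem_support] at hk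
    rcases Nat.even_or_odd k with he | ho
    · exfalso
      obtain ⟨r, rfl⟩ := he
      have hrr : r + r = 2 * r := by ring
      rw [hrr] at hk
      have h0 : (∫ θ in (0:ℝ)..π, Real.cos θ ^ (2 * r + 1)) = 0 := cos_pow_int_odd r
      exact hk (by rw [h0, mul_zero])
    · obtain ⟨r, rfl⟩ := ho
      exact ⟨r, by dsimp⟩

lemma sqrt_tendsto_atTop : Tendsto Real.sqrt atTop atTop := by
  apply tendsto_atTop_atTop.2
  intro b
  refine ⟨max 0 b ^ 2, fun a ha => ?_⟩
  have h1 : Real.sqrt (max 0 b ^ 2) ≤ Real.sqrt a := Real.sqrt_le_sqrt ha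
  rw [Real.sqrt_sq (le_max_left 0 b)] at h1
  exact (le_max_right 0 b).trans h1

lemma sin_div_self_tendsto : Tendsto (fun u : ℝ => Real.sin u / u) (nhdsWithin 0 {0}ᶜ) (nhds 1) := by
  have h := Real.hasDerivAt_sin 0
  rw [hasDerivAt_iff_tendsto_slope] at h
  simp only [Real.cos_zero] at h
  refine h.congr' ?_
  filter_upwards [self_mem_nhdsWithin] with u hu
  simp [slope_def_field, Real.sin_zero]

lemma cos_one_sub_sin_sq (θ : ℝ) : Real.cos θ = 1 - 2 * Real.sin (θ / 2) ^ 2 := by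
  have h := Real.sin_sq_add_cos_sq (θ / 2)
  have h2 : Real.cos θ = Real.cos (2 * (θ / 2)) := by
    congr 1
    ring
  rw [h2, Real.cos_two_mul']
  nlinarith

set_option maxHeartbeats 1000000 in
lemma laplace_tendsto {w : ℝ → ℝ} (hw : Continuous w) (hbd : ∀ θ, |w θ| ≤ 1) (hw0 : w 0 = 1) :
    Tendsto (fun z => Real.sqrt z *
        (Real.exp (-z) * ∫ θ in (0:ℝ)..π, Real.exp (z * Real.cos θ) * w θ))
      atTop (nhds (Real.sqrt (2 * π) / 2)) := by
  have hπ := Real.pi_pos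
  set f : ℝ → ℝ := Set.indicator (Set.Ioi 0) (fun v => Real.exp (-(1/2) * v ^ 2)) with hf
  have htarget : (∫ v, f v) = Real.sqrt (2 * π) / 2 := by
    rw [hf, MeasureTheory.integral_indicator measurableSet_Ioi, integral_gaussian_Ioi]
    rw [show π / (1/2 : ℝ) = 2 * π by ring]
  set G : ℝ → ℝ → ℝ := fun z => Set.indicator (Set.Ioc 0 (π * Real.sqrt z))
      (fun v => Real.exp (z * (Real.cos (v / Real.sqrt z) - 1)) * w (v / Real.sqrt z)) with hG
  have key : Tendsto (fun z => ∫ v, G z v) atTop (nhds (∫ v, f v)) := by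
    apply MeasureTheory.tendsto_integral_filter_of_dominated_convergence
      (bound := Set.indicator (Set.Ioi 0) (fun v => Real.exp (-(2 / π ^ 2) * v ^ 2)))
    · filter_upwards with z
      refine AEStronglyMeasurable.indicator ?_ measurableSet_Ioc
      exact Continuous.aestronglyMeasurable (by fun_prop)
    · filter_upwards [eventually_gt_atTop (0:ℝ)] with z hz
      filter_upwards with v
      by_cases hv : v ∈ Set.Ioc 0 (π * Real.sqrt z)
      · rw [hG]
        simp only [Set.indicator_of_mem hv]
        have hsz : 0 < Real.sqrt z := Real.sqrt_pos.2 hz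
        have hθ0 : 0 < v / Real.sqrt z := div_pos hv.1 hsz
        have hθπ : v / Real.sqrt z ≤ π := by
          rw [div_le_iff₀ hsz]
          exact hv.2
        set θ := v / Real.sqrt z with hθdef
        have hcos : 2 / π ^ 2 * θ ^ 2 ≤ 1 - Real.cos θ := by
          have h2 := cos_one_sub_sin_sq θ
          have hs : 2 / π * (θ / 2) ≤ Real.sin (θ / 2) :=
            Real.mul_le_sin (by positivity) (by linarith)
          have hs' : θ / π ≤ Real.sin (θ / 2) := by
            rw [show 2 / π * (θ / 2) = θ / π by ring] at hs
            exact hs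
          have hsq : (θ / π) ^ 2 ≤ Real.sin (θ / 2) ^ 2 := by
            have h5 := mul_self_le_mul_self (by positivity : (0:ℝ) ≤ θ / π) hs'
            nlinarith
          have heq : 2 / π ^ 2 * θ ^ 2 = 2 * (θ / π) ^ 2 := by
            rw [div_pow]
            ring
          linarith
        rw [Set.indicator_of_mem (show v ∈ Set.Ioi 0 from hv.1)]
        have h1 : ‖Real.exp (z * (Real.cos θ - 1)) * w θ‖
            ≤ Real.exp (z * (Real.cos θ - 1)) := by
          rw [norm_mul, Real.norm_eq_abs, Real.norm_eq_abs, Real.abs_exp]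
          nlinarith [Real.exp_pos (z * (Real.cos θ - 1)), hbd θ, abs_nonneg (w θ)]
        refine h1.trans (Real.exp_le_exp.2 ?_)
        have hθsq : θ ^ 2 = v ^ 2 / z := by
          rw [hθdef, div_pow, Real.sq_sqrt hz.le]
        have h3 : z * (2 / π ^ 2 * θ ^ 2) ≤ z * (1 - Real.cos θ) :=
          mul_le_mul_of_nonneg_left hcos hz.le
        have h4 : z * (2 / π ^ 2 * θ ^ 2) = 2 / π ^ 2 * v ^ 2 := by
          rw [hθsq]
          field_simp
        nlinarith
      · rw [hG]
        simp only [Set.indicator_of_notMem hv, norm_zero]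
        apply Set.indicator_nonneg
        intro y _
        positivity
    · exact (integrable_exp_neg_mul_sq (by positivity)).indicator measurableSet_Ioi
    · have h0 : ∀ᵐ v : ℝ, v ≠ (0:ℝ) := by
        have hset : {a : ℝ | ¬ a ≠ 0} = {(0:ℝ)} := by
          ext a
          simp
        rw [MeasureTheory.ae_iff, hset]
        exact MeasureTheory.measure_singleton 0
      filter_upwards [h0] with v hv
      rcases lt_or_gt_of_ne hv with hneg | hpos
      · have hzero : ∀ z : ℝ, G z v = 0 := by
          intro z
          rw [hG]
          exact Set.indicator_of_notMem (fun h => absurd h.1 (not_lt.2 hneg.le)) _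
        have hfv : f v = 0 := by
          rw [hf]
          exact Set.indicator_of_notMem
            (by simp only [Set.mem_Ioi, not_lt]; exact hneg.le) _
        rw [hfv]
        simp only [hzero]
        exact tendsto_const_nhds
      · rw [hf, Set.indicator_of_mem (Set.mem_Ioi.2 hpos)]
        have hev : (fun z : ℝ => G z v) =ᶠ[atTop]
            fun z => Real.exp (z * (Real.cos (v / Real.sqrt z) - 1)) * w (v / Real.sqrt z) := by
          filter_upwards [eventually_ge_atTop ((v / π) ^ 2), eventually_gt_atTop (0:ℝ)]
            with z hz1 hz2
          rw [hG]
          apply Set.indicator_of_mem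
          refine ⟨hpos, ?_⟩
          have h1 : v / π ≤ Real.sqrt z := by
            rw [← Real.sqrt_sq (by positivity : (0:ℝ) ≤ v / π)]
            exact Real.sqrt_le_sqrt hz1
          calc v = π * (v / π) := by field_simp
            _ ≤ π * Real.sqrt z := by
                exact mul_le_mul_of_nonneg_left h1 hπ.le
        have hθ0 : Tendsto (fun z : ℝ => v / Real.sqrt z) atTop (nhds 0) :=
          tendsto_const_nhds.div_atTop sqrt_tendsto_atTop
        have hwlim : Tendsto (fun z : ℝ => w (v / Real.sqrt z)) atTop (nhds 1) := by
          rw [← hw0]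
          exact (hw.tendsto 0).comp hθ0
        have hu : Tendsto (fun z : ℝ => v / (2 * Real.sqrt z)) atTop (nhdsWithin 0 {0}ᶜ) := by
          rw [tendsto_nhdsWithin_iff]
          constructor
          · exact tendsto_const_nhds.div_atTop
              (sqrt_tendsto_atTop.const_mul_atTop (by norm_num))
          · filter_upwards [eventually_gt_atTop (0:ℝ)] with z hz
            have hsz : 0 < Real.sqrt z := Real.sqrt_pos.2 hz
            simp only [Set.mem_compl_iff, Set.mem_singleton_iff]
            positivity
        have hexp_arg : Tendsto (fun z : ℝ => z * (Real.cos (v / Real.sqrt z) - 1)) atTop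
            (nhds (-(1/2) * v ^ 2)) := by
          have hmain : Tendsto (fun z : ℝ => -(1/2) * v ^ 2 *
              (Real.sin (v / (2 * Real.sqrt z)) / (v / (2 * Real.sqrt z))) ^ 2) atTop
              (nhds (-(1/2) * v ^ 2)) := by
            have h2 := (sin_div_self_tendsto.comp hu).pow 2
            have h3 := tendsto_const_nhds (x := -(1/2) * v ^ 2) (f := atTop (α := ℝ)) |>.mul h2
            simpa using h3
          refine Tendsto.congr' ?_ hmain
          filter_upwards [eventually_gt_atTop (0:ℝ)] with z hz
          have hsz : 0 < Real.sqrt z := Real.sqrt_pos.2 hz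
          have hzsq : Real.sqrt z ^ 2 = z := Real.sq_sqrt hz.le
          have hcosid : Real.cos (v / Real.sqrt z)
              = 1 - 2 * Real.sin (v / (2 * Real.sqrt z)) ^ 2 := by
            rw [cos_one_sub_sin_sq (v / Real.sqrt z), div_div, mul_comm (Real.sqrt z) 2]
          rw [hcosid]
          have h6 : (v / (2 * Real.sqrt z)) ^ 2 = v ^ 2 / (4 * z) := by
            rw [div_pow, mul_pow, hzsq]
            norm_num
          rw [div_pow, h6]
          have hvne : v ≠ 0 := hv
          field_simp
          ring
        have hfinal := ((Real.continuous_exp.tendsto _).comp hexp_arg).mul hwlim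
        rw [mul_one] at hfinal
        exact Tendsto.congr' hev.symm hfinal
  rw [← htarget]
  refine Tendsto.congr' ?_ key
  filter_upwards [eventually_gt_atTop (0:ℝ)] with z hz
  have hsz : 0 < Real.sqrt z := Real.sqrt_pos.2 hz
  rw [hG]
  rw [MeasureTheory.integral_indicator measurableSet_Ioc,
    ← intervalIntegral.integral_of_le (by positivity : (0:ℝ) ≤ π * Real.sqrt z)]
  have hsub := intervalIntegral.integral_comp_div (a := 0) (b := π * Real.sqrt z)
    (c := Real.sqrt z)
    (f := fun θ => Real.exp (z * (Real.cos θ - 1)) * w θ) hsz.ne'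
  rw [hsub, zero_div, mul_div_assoc, div_self hsz.ne', mul_one, smul_eq_mul]
  congr 1
  rw [← intervalIntegral.integral_const_mul]
  refine intervalIntegral.integral_congr fun θ _ => ?_
  rw [← mul_assoc, ← Real.exp_add]
  congr 2
  ring

lemma I0_asymp : Tendsto (fun z => Real.sqrt z * Real.exp (-z) * besselI0 z) atTop
    (nhds (Real.sqrt (2 * π) / 2 / π)) := by
  have h := (laplace_tendsto (w := fun _ => (1:ℝ)) continuous_const
      (fun θ => by norm_num) rfl).div_const π
  simp only [mul_one] at h
  refine Tendsto.congr (fun z => ?_) h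
  have hI := besselI0_integral z
  have hπ : (π:ℝ) ≠ 0 := Real.pi_ne_zero
  rw [← hI]
  field_simp

lemma I1_asymp : Tendsto (fun z => Real.sqrt z * Real.exp (-z) * besselI1 z) atTop
    (nhds (Real.sqrt (2 * π) / 2 / π)) := by
  have h := (laplace_tendsto (w := Real.cos) Real.continuous_cos
      (fun θ => Real.abs_cos_le_one θ) Real.cos_zero).div_const π
  refine Tendsto.congr (fun z => ?_) h
  have hI := besselI1_integral z
  have hπ : (π:ℝ) ≠ 0 := Real.pi_ne_zero
  rw [← hI]
  field_simp

end TelegraphAux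

theorem telegraph_kac_limit_to_heat_kernel
    (ρ x t : ℝ) (hρ : 0 < ρ) (ht : 0 < t)
    (c lam : ℕ → ℝ)
    (hc_pos : ∀ n, 0 < c n) (hlam_pos : ∀ n, 0 < lam n)
    (hc : Tendsto c atTop atTop)
    (hlam : Tendsto lam atTop atTop)
    (hkac : Tendsto (fun n => (c n) ^ 2 / lam n) atTop (nhds (ρ ^ 2))) :
    Tendsto (fun n =>
      if |x| < c n * t then
        (lam n * Real.exp (-(lam n * t)) / (2 * c n)) *
          (besselI0 ((lam n / c n) * Real.sqrt ((c n * t) ^ 2 - x ^ 2)) +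
            ((c n * t) / Real.sqrt ((c n * t) ^ 2 - x ^ 2)) *
              besselI1 ((lam n / c n) * Real.sqrt ((c n * t) ^ 2 - x ^ 2)))
      else 0)
      atTop
      (nhds ((1 / Real.sqrt (2 * π * ρ ^ 2 * t)) * Real.exp (-x ^ 2 / (2 * ρ ^ 2 * t)))) := by
  have hρ2 : (0:ℝ) < ρ ^ 2 := by positivity
  have hπ := Real.pi_pos
  set s : ℕ → ℝ := fun n => Real.sqrt ((c n * t) ^ 2 - x ^ 2) with hs_def
  set z : ℕ → ℝ := fun n => (lam n / c n) * s n with hz_def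
  have hct : Tendsto (fun n => c n * t) atTop atTop := hc.atTop_mul_const ht
  have hev : ∀ᶠ n in atTop, |x| < c n * t := hct.eventually_gt_atTop |x|
  have hxc : Tendsto (fun n => x / c n) atTop (nhds 0) := tendsto_const_nhds.div_atTop hc
  have hsqA : ∀ᶠ n in atTop, 0 < (c n * t) ^ 2 - x ^ 2 := by
    filter_upwards [hev] with n hn
    nlinarith [le_abs_self x, neg_abs_le x, abs_nonneg x]
  have L1 : Tendsto (fun n => s n / c n) atTop (nhds t) := by
    have h2 : Tendsto (fun n => t ^ 2 - (x / c n) ^ 2) atTop (nhds (t ^ 2)) := by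
      have h2' := (tendsto_const_nhds (x := t ^ 2) (f := atTop (α := ℕ))).sub (hxc.pow 2)
      simpa using h2'
    have h1 : Tendsto (fun n => Real.sqrt (t ^ 2 - (x / c n) ^ 2)) atTop (nhds t) := by
      have h3 := (Real.continuous_sqrt.tendsto _).comp h2
      simpa [Real.sqrt_sq ht.le, Function.comp_def] using h3
    refine Tendsto.congr' ?_ h1
    filter_upwards [hsqA] with n hn
    have hc0 := hc_pos n
    simp only [hs_def]
    rw [show t ^ 2 - (x / c n) ^ 2 = ((c n * t) ^ 2 - x ^ 2) / (c n) ^ 2 by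
      field_simp]
    rw [Real.sqrt_div hn.le, Real.sqrt_sq hc0.le]
  have hz_eq : z = fun n => lam n * (s n / c n) := by
    funext n
    simp only [hz_def]
    ring
  have hz_top : Tendsto z atTop atTop := by
    rw [hz_eq]
    exact hlam.atTop_mul_pos ht L1
  have hlamc2 : Tendsto (fun n => lam n / (c n) ^ 2) atTop (nhds (ρ ^ 2)⁻¹) := by
    have h := hkac.inv₀ hρ2.ne'
    refine h.congr fun n => ?_
    rw [inv_div]
  have hspos : ∀ᶠ n in atTop, 0 < s n := by
    filter_upwards [hsqA] with n hn
    exact Real.sqrt_pos.2 hn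
  have hzpos : ∀ᶠ n in atTop, 0 < z n := by
    filter_upwards [hspos] with n hn
    have h1 := hlam_pos n
    have h2 := hc_pos n
    simp only [hz_def]
    positivity
  have hE : Tendsto (fun n => z n - lam n * t) atTop (nhds (-x ^ 2 / (2 * ρ ^ 2 * t))) := by
    have hden : Tendsto (fun n => s n / c n + t) atTop (nhds (t + t)) := by
      simpa using L1.add (tendsto_const_nhds (x := t))
    have h1 : Tendsto (fun n => -x ^ 2 * (lam n / (c n) ^ 2) / (s n / c n + t)) atTop
        (nhds (-x ^ 2 * (ρ ^ 2)⁻¹ / (t + t))) :=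
      (tendsto_const_nhds.mul hlamc2).div hden (by positivity : (0:ℝ) < t + t).ne'
    have hconst : -x ^ 2 * (ρ ^ 2)⁻¹ / (t + t) = -x ^ 2 / (2 * ρ ^ 2 * t) := by
      rw [div_eq_div_iff (by positivity) (by positivity)]
      field_simp
      ring
    rw [← hconst]
    refine Tendsto.congr' ?_ h1
    filter_upwards [hsqA, hspos] with n hA hs0
    have hc0 := hc_pos n
    have hsq : s n ^ 2 = (c n * t) ^ 2 - x ^ 2 := Real.sq_sqrt hA.le
    have hden0 : (0:ℝ) < s n / c n + t := by positivity
    have hsum : (0:ℝ) < s n + c n * t := by positivity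
    have h2 : s n - c n * t = -x ^ 2 / (s n + c n * t) := by
      rw [eq_div_iff hsum.ne']
      nlinarith [hsq]
    have h3 : z n - lam n * t = (lam n / c n) * (s n - c n * t) := by
      simp only [hz_def]
      field_simp
    rw [h3, h2]
    field_simp
  have hfac : Tendsto (fun n => lam n / (c n * Real.sqrt (z n))) atTop
      (nhds (Real.sqrt ((ρ ^ 2)⁻¹ / t))) := by
    have h1 : Tendsto (fun n => Real.sqrt ((lam n / (c n) ^ 2) / (s n / c n))) atTop
        (nhds (Real.sqrt ((ρ ^ 2)⁻¹ / t))) :=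
      (Real.continuous_sqrt.tendsto _).comp (hlamc2.div L1 ht.ne')
    refine Tendsto.congr' ?_ h1
    filter_upwards [hspos, hzpos] with n hs0 hz0
    have hc0 := hc_pos n
    have hl0 := hlam_pos n
    have h2 : (lam n / (c n) ^ 2) / (s n / c n) = (lam n / (c n * Real.sqrt (z n))) ^ 2 := by
      rw [div_pow, mul_pow, Real.sq_sqrt hz0.le]
      simp only [hz_def]
      field_simp
    rw [h2, Real.sqrt_sq (div_nonneg hl0.le (mul_nonneg hc0.le (Real.sqrt_nonneg _)))]
  have hratio : Tendsto (fun n => c n * t / s n) atTop (nhds 1) := by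
    have h1 : Tendsto (fun n => t / (s n / c n)) atTop (nhds (t / t)) :=
      tendsto_const_nhds.div L1 ht.ne'
    rw [div_self ht.ne'] at h1
    refine Tendsto.congr' ?_ h1
    filter_upwards [hspos] with n hs0
    have hc0 := hc_pos n
    rw [div_div_eq_mul_div, mul_comm]
  have hI0 : Tendsto (fun n => Real.sqrt (z n) * Real.exp (-z n) * besselI0 (z n)) atTop
      (nhds (Real.sqrt (2 * π) / 2 / π)) := TelegraphAux.I0_asymp.comp hz_top
  have hI1 : Tendsto (fun n => Real.sqrt (z n) * Real.exp (-z n) * besselI1 (z n)) atTop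
      (nhds (Real.sqrt (2 * π) / 2 / π)) := TelegraphAux.I1_asymp.comp hz_top
  have hexpE : Tendsto (fun n => Real.exp (z n - lam n * t)) atTop
      (nhds (Real.exp (-x ^ 2 / (2 * ρ ^ 2 * t)))) := (Real.continuous_exp.tendsto _).comp hE
  have hmain : Tendsto (fun n => (1/2 : ℝ) * (lam n / (c n * Real.sqrt (z n)))
        * Real.exp (z n - lam n * t)
        * (Real.sqrt (z n) * Real.exp (-z n) * besselI0 (z n)
           + (c n * t / s n) * (Real.sqrt (z n) * Real.exp (-z n) * besselI1 (z n))))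
      atTop (nhds ((1/2 : ℝ) * Real.sqrt ((ρ ^ 2)⁻¹ / t) * Real.exp (-x ^ 2 / (2 * ρ ^ 2 * t))
        * (Real.sqrt (2 * π) / 2 / π + 1 * (Real.sqrt (2 * π) / 2 / π)))) :=
    ((tendsto_const_nhds.mul hfac).mul hexpE).mul (hI0.add (hratio.mul hI1))
  have hlimeq : (1/2 : ℝ) * Real.sqrt ((ρ ^ 2)⁻¹ / t) * Real.exp (-x ^ 2 / (2 * ρ ^ 2 * t))
        * (Real.sqrt (2 * π) / 2 / π + 1 * (Real.sqrt (2 * π) / 2 / π))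
      = (1 / Real.sqrt (2 * π * ρ ^ 2 * t)) * Real.exp (-x ^ 2 / (2 * ρ ^ 2 * t)) := by
    have h2π : Real.sqrt (2 * π) * Real.sqrt (2 * π) = 2 * π :=
      Real.mul_self_sqrt (by positivity)
    have hsp : Real.sqrt ((ρ ^ 2)⁻¹ / t) = (ρ * Real.sqrt t)⁻¹ := by
      rw [show ((ρ ^ 2)⁻¹ / t) = ((ρ * Real.sqrt t) ^ 2)⁻¹ by
          rw [mul_pow, Real.sq_sqrt ht.le]; field_simp]
      rw [Real.sqrt_inv, Real.sqrt_sq (by positivity)]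
    have hprod : Real.sqrt (2 * π * ρ ^ 2 * t) = Real.sqrt (2 * π) * (ρ * Real.sqrt t) := by
      rw [show 2 * π * ρ ^ 2 * t = (2 * π) * (ρ * Real.sqrt t) ^ 2 by
          rw [mul_pow, Real.sq_sqrt ht.le]; ring]
      rw [Real.sqrt_mul (by positivity), Real.sqrt_sq (by positivity)]
    have hK : Real.sqrt (2 * π) / 2 / π = (Real.sqrt (2 * π))⁻¹ := by
      rw [div_div]
      exact eq_inv_of_mul_eq_one_left
        (by rw [div_mul_eq_mul_div, h2π, div_self (by positivity : (2 * π : ℝ) ≠ 0)])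
    rw [hsp, hprod, hK]
    have hst : 0 < Real.sqrt t := Real.sqrt_pos.2 ht
    have h2πpos : 0 < Real.sqrt (2 * π) := Real.sqrt_pos.2 (by positivity)
    field_simp
    ring
  rw [← hlimeq]
  refine Tendsto.congr' ?_ hmain
  filter_upwards [hev, hspos, hzpos] with n hn hs0 hz0
  rw [if_pos hn]
  have hz_n : (lam n / c n) * Real.sqrt ((c n * t) ^ 2 - x ^ 2) = z n := rfl
  have hs_n : Real.sqrt ((c n * t) ^ 2 - x ^ 2) = s n := rfl
  rw [hz_n, hs_n]
  have hc0 := hc_pos n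
  have hl0 := hlam_pos n
  have hsz : 0 < Real.sqrt (z n) := Real.sqrt_pos.2 hz0
  have hexpz : Real.exp (z n - lam n * t) = Real.exp (z n) * Real.exp (-(lam n * t)) := by
    rw [← Real.exp_add]
    ring_nf
  have hezz : Real.exp (-z n) = (Real.exp (z n))⁻¹ := Real.exp_neg _
  rw [hexpz, hezz]
  field_simp
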